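/- arXiv:2503.11868 — 2 statements merged into one kernel-verified Lean document; each statement's English description precedes it below -/
import Mathlib

section
/- Let P be a probability measure on a measurable space X, let k : X × X → ℝ be a symmetric, measurable, bounded kernel, and let x₁, …, xₙ ∈ X be points whose kernel matrix K = (k(x_i,x_j)) is positive definite. Define the cost function c(ξ, ξ') = k(ξ,ξ') − k(ξ,x)ᵀ K⁻¹ k(ξ',x) + (1/(𝟙ᵀ K⁻¹ 𝟙)) (1 − 𝟙ᵀ K⁻¹ k(ξ,x)) (1 − 𝟙ᵀ K⁻¹ k(ξ',x)), where k(ξ,x) = (k(ξ,x₁), …, k(ξ,xₙ)) ∈ ℝⁿ and 𝟙 is the all-ones vector. Then ∬_{X×X} c(ξ, ξ') d(P ⊗ P)(ξ, ξ') = ∬_{X×X} k(ξ,ξ') dP(ξ) dP(ξ') − mᵀ K⁻¹ m + (𝟙ᵀ K⁻¹ m − 1)²/(𝟙ᵀ K⁻¹ 𝟙), where m ∈ ℝⁿ has entries m_i = ∫_X k(x_i,ξ) dP(ξ). -/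
open MeasureTheory Matrix

/-- The expectation under `P ⊗ P` of the cost function
`c(ξ,ξ') = k(ξ,ξ') − k(ξ,x)ᵀK⁻¹k(ξ',x)
  + (1/(𝟙ᵀK⁻¹𝟙))(1 − 𝟙ᵀK⁻¹k(ξ,x))(1 − 𝟙ᵀK⁻¹k(ξ',x))`
equals `∬ k dP dP − mᵀK⁻¹m + (𝟙ᵀK⁻¹m − 1)²/(𝟙ᵀK⁻¹𝟙)`. -/
theorem stmt8
    {X : Type*} [MeasurableSpace X] (k : X → X → ℝ)
    (hsymm : ∀ a b, k a b = k b a)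
    (hmeas : Measurable fun p : X × X => k p.1 p.2)
    (hbdd : ∃ C : ℝ, ∀ a b, |k a b| ≤ C)
    (P : Measure X) [IsProbabilityMeasure P]
    (n : ℕ) (x : Fin n → X)
    (K : Matrix (Fin n) (Fin n) ℝ)
    (hKdef : ∀ i j, K i j = k (x i) (x j))
    (hK : K.PosDef)
    (kv : X → Fin n → ℝ) (hkv : ∀ ξ i, kv ξ i = k ξ (x i))
    (m : Fin n → ℝ) (hm : ∀ i, m i = ∫ ξ, k (x i) ξ ∂P)
    (c : X → X → ℝ)
    (hc : ∀ ξ ξ', c ξ ξ' = k ξ ξ' - kv ξ ⬝ᵥ (K⁻¹ *ᵥ kv ξ')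
        + ((1 : Fin n → ℝ) ⬝ᵥ (K⁻¹ *ᵥ (1 : Fin n → ℝ)))⁻¹
          * (1 - (1 : Fin n → ℝ) ⬝ᵥ (K⁻¹ *ᵥ kv ξ))
          * (1 - (1 : Fin n → ℝ) ⬝ᵥ (K⁻¹ *ᵥ kv ξ'))) :
    ∫ z, c z.1 z.2 ∂(P.prod P)
      = (∫ ξ, ∫ ξ', k ξ ξ' ∂P ∂P) - m ⬝ᵥ (K⁻¹ *ᵥ m)
        + ((1 : Fin n → ℝ) ⬝ᵥ (K⁻¹ *ᵥ m) - 1) ^ 2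
          / ((1 : Fin n → ℝ) ⬝ᵥ (K⁻¹ *ᵥ (1 : Fin n → ℝ))) := by
  obtain ⟨C, hC⟩ := hbdd
  set A := K⁻¹ with hA
  -- measurability and integrability of kv components
  have hkvmeas : ∀ i, Measurable fun ξ => kv ξ i := by
    intro i
    have h : (fun ξ => kv ξ i) = fun ξ => k ξ (x i) := funext fun ξ => hkv ξ i
    rw [h]
    exact hmeas.comp (measurable_id.prodMk measurable_const)
  have hkvint : ∀ i, Integrable (fun ξ => kv ξ i) P := by
    intro i
    refine ⟨(hkvmeas i).aestronglyMeasurable,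
      HasFiniteIntegral.of_bounded (C := C) (ae_of_all _ fun ξ => ?_)⟩
    rw [hkv, Real.norm_eq_abs]; exact hC _ _
  have hmi : ∀ i, ∫ ξ, kv ξ i ∂P = m i := by
    intro i
    rw [hm]
    refine integral_congr_ae (ae_of_all _ fun ξ => ?_)
    show kv ξ i = k (x i) ξ
    rw [hkv, hsymm]
  -- sum expansions
  set b : Fin n → ℝ := fun j => ∑ i, A i j with hb
  have hg : ∀ v : Fin n → ℝ, (1 : Fin n → ℝ) ⬝ᵥ (A *ᵥ v) = ∑ j, b j * v j := by
    intro v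
    simp only [dotProduct, mulVec, hb, Pi.one_apply, one_mul, Finset.sum_mul]
    rw [Finset.sum_comm]
  have hbil : ∀ ξ ξ', kv ξ ⬝ᵥ (A *ᵥ kv ξ') = ∑ i, ∑ j, A i j * (kv ξ i * kv ξ' j) := by
    intro ξ ξ'
    simp only [dotProduct, mulVec, Finset.mul_sum]
    refine Finset.sum_congr rfl fun i _ => Finset.sum_congr rfl fun j _ => by ring
  -- F : first term
  have hFint : Integrable (fun z : X × X => k z.1 z.2) (P.prod P) := by
    refine ⟨hmeas.aestronglyMeasurable,
      HasFiniteIntegral.of_bounded (C := C) (ae_of_all _ fun z => ?_)⟩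
    rw [Real.norm_eq_abs]; exact hC _ _
  -- G : bilinear term
  have hGint : Integrable (fun z : X × X => kv z.1 ⬝ᵥ (A *ᵥ kv z.2)) (P.prod P) := by
    have h : (fun z : X × X => kv z.1 ⬝ᵥ (A *ᵥ kv z.2))
        = fun z => ∑ i, ∑ j, A i j * (kv z.1 i * kv z.2 j) := funext fun z => hbil _ _
    rw [h]
    refine integrable_finset_sum _ fun i _ => integrable_finset_sum _ fun j _ => ?_
    exact ((hkvint i).mul_prod (hkvint j)).const_mul _
  have hGval : ∫ z, kv z.1 ⬝ᵥ (A *ᵥ kv z.2) ∂(P.prod P) = m ⬝ᵥ (A *ᵥ m) := by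
    have h : (fun z : X × X => kv z.1 ⬝ᵥ (A *ᵥ kv z.2))
        = fun z => ∑ i, ∑ j, A i j * (kv z.1 i * kv z.2 j) := funext fun z => hbil _ _
    rw [h]
    rw [integral_finset_sum _ (f := fun i (z : X × X) => ∑ j, A i j * (kv z.1 i * kv z.2 j))
      fun i _ => integrable_finset_sum _ fun j _ =>
      ((hkvint i).mul_prod (hkvint j)).const_mul _]
    have h2 : ∀ i : Fin n, ∫ z : X × X, ∑ j, A i j * (kv z.1 i * kv z.2 j) ∂(P.prod P)
        = ∑ j, A i j * (m i * m j) := by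
      intro i
      rw [integral_finset_sum _ fun j _ => ((hkvint i).mul_prod (hkvint j)).const_mul _]
      refine Finset.sum_congr rfl fun j _ => ?_
      rw [integral_const_mul, integral_prod_mul (f := fun ξ => kv ξ i) (g := fun ξ => kv ξ j), hmi, hmi]
    rw [Finset.sum_congr rfl fun i _ => h2 i]
    simp only [dotProduct, mulVec, Finset.mul_sum]
    refine Finset.sum_congr rfl fun i _ => Finset.sum_congr rfl fun j _ => by ring
  -- u : centering function
  set u : X → ℝ := fun ξ => 1 - (1 : Fin n → ℝ) ⬝ᵥ (A *ᵥ kv ξ) with hu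
  have huint : Integrable u P := by
    have h : u = fun ξ => 1 - ∑ j, b j * kv ξ j := funext fun ξ => by simp only [hu]; rw [hg]
    rw [h]
    exact (integrable_const 1).sub (integrable_finset_sum _ fun j _ => (hkvint j).const_mul _)
  have huval : ∫ ξ, u ξ ∂P = 1 - (1 : Fin n → ℝ) ⬝ᵥ (A *ᵥ m) := by
    have h : u = fun ξ => 1 - ∑ j, b j * kv ξ j := funext fun ξ => by simp only [hu]; rw [hg]
    rw [h, integral_sub (integrable_const 1)
      (integrable_finset_sum _ fun j _ => (hkvint j).const_mul _)]
    rw [integral_const, integral_finset_sum _ fun j _ => (hkvint j).const_mul _]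
    simp only [probReal_univ, measure_univ, ENNReal.toReal_one, smul_eq_mul, one_mul]
    rw [hg m]
    congr 1
    exact Finset.sum_congr rfl fun j _ => by rw [integral_const_mul, hmi]
  -- split the integral
  set α : ℝ := (1 : Fin n → ℝ) ⬝ᵥ (A *ᵥ (1 : Fin n → ℝ)) with hα
  have hsplit : (fun z : X × X => c z.1 z.2)
      = fun z => (k z.1 z.2 - kv z.1 ⬝ᵥ (A *ᵥ kv z.2)) + α⁻¹ * (u z.1 * u z.2) := by
    funext z
    rw [hc]
    simp only [hu]
    ring
  rw [hsplit]
  have h1 : Integrable (fun z : X × X => k z.1 z.2 - kv z.1 ⬝ᵥ (A *ᵥ kv z.2)) (P.prod P) :=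
    hFint.sub hGint
  have h2 : Integrable (fun z : X × X => α⁻¹ * (u z.1 * u z.2)) (P.prod P) :=
    (huint.mul_prod huint).const_mul _
  rw [integral_add h1 h2]
  rw [integral_sub hFint hGint, integral_const_mul, integral_prod_mul (f := u) (g := u)]
  have hF : ∫ z : X × X, k z.1 z.2 ∂(P.prod P) = ∫ ξ, ∫ ξ', k ξ ξ' ∂P ∂P := by
    rw [integral_prod _ hFint]
  rw [hGval, huval, hF, div_eq_mul_inv]
  ring
end

section
/- Let K be a real symmetric positive definite n×n matrix, m ∈ ℝⁿ, and 𝟙 ∈ ℝⁿ the all-ones vector, and set p = (K⁻¹ − (K⁻¹ 𝟙 𝟙ᵀ K⁻¹)/(𝟙ᵀ K⁻¹ 𝟙)) m + (K⁻¹ 𝟙)/(𝟙ᵀ K⁻¹ 𝟙). Then K p + 𝟙 (pᵀ m) − 𝟙 (pᵀ K p) = m. -/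
open Matrix

/-- For a real symmetric positive definite `K` and
`p = (K⁻¹ − (K⁻¹𝟙𝟙ᵀK⁻¹)/(𝟙ᵀK⁻¹𝟙)) m + (K⁻¹𝟙)/(𝟙ᵀK⁻¹𝟙)`, one has
`K p + 𝟙 (pᵀ m) − 𝟙 (pᵀ K p) = m`. -/
theorem stmt16
    (n : ℕ) (K : Matrix (Fin n) (Fin n) ℝ) (hK : K.PosDef)
    (m : Fin n → ℝ)
    (p : Fin n → ℝ)
    (hp : p =
      (K⁻¹ - ((1 : Fin n → ℝ) ⬝ᵥ (K⁻¹ *ᵥ (1 : Fin n → ℝ)))⁻¹ •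
          vecMulVec (K⁻¹ *ᵥ (1 : Fin n → ℝ)) ((1 : Fin n → ℝ) ᵥ* K⁻¹)) *ᵥ m
        + ((1 : Fin n → ℝ) ⬝ᵥ (K⁻¹ *ᵥ (1 : Fin n → ℝ)))⁻¹ • (K⁻¹ *ᵥ (1 : Fin n → ℝ))) :
    K *ᵥ p + (p ⬝ᵥ m) • (1 : Fin n → ℝ) - (p ⬝ᵥ (K *ᵥ p)) • (1 : Fin n → ℝ) = m := by
  rcases Nat.eq_zero_or_pos n with hn | hn
  · subst hn; exact Subsingleton.elim _ _
  set u : Fin n → ℝ := K⁻¹ *ᵥ (1 : Fin n → ℝ) with hu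
  set c : ℝ := (1 : Fin n → ℝ) ⬝ᵥ u with hc
  have h1ne : (1 : Fin n → ℝ) ≠ 0 := fun h => one_ne_zero (congrFun h ⟨0, hn⟩)
  have hKi : K⁻¹.PosDef := hK.inv
  have hcpos : 0 < c := by
    have := hKi.dotProduct_mulVec_pos (x := (1 : Fin n → ℝ)) h1ne
    simpa [hc, hu] using this
  have hcne : c ≠ 0 := hcpos.ne'
  have hdet : IsUnit K.det := isUnit_iff_ne_zero.mpr hK.det_pos.ne'
  have hKmul : ∀ x : Fin n → ℝ, K *ᵥ (K⁻¹ *ᵥ x) = x := by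
    intro x
    rw [mulVec_mulVec, mul_nonsing_inv _ hdet, one_mulVec]
  have hKsymm : K⁻¹ᵀ = K⁻¹ := by
    have h1 : Kᵀ = K := hK.isHermitian
    rw [transpose_nonsing_inv, h1]
  have hvm : (1 : Fin n → ℝ) ᵥ* K⁻¹ = u := by
    rw [hu, ← hKsymm, vecMul_transpose]; rw [hKsymm]
  have h1d : ∀ x : Fin n → ℝ, (1 : Fin n → ℝ) ⬝ᵥ (K⁻¹ *ᵥ x) = u ⬝ᵥ x := by
    intro x
    rw [dotProduct_mulVec, hvm]
  have hvv : ∀ x : Fin n → ℝ, vecMulVec u ((1 : Fin n → ℝ) ᵥ* K⁻¹) *ᵥ x = (u ⬝ᵥ x) • u := by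
    intro x
    rw [hvm]
    ext i
    simp only [vecMulVec_apply, mulVec, dotProduct, Pi.smul_apply, smul_eq_mul,
      Finset.sum_mul]
    exact Finset.sum_congr rfl fun j _ => by ring
  set d : ℝ := u ⬝ᵥ m with hd
  have hpe : p = K⁻¹ *ᵥ m - (c⁻¹ * d) • u + c⁻¹ • u := by
    rw [hp, sub_mulVec, smul_mulVec, hvv, hd, smul_smul]
  have hKp : K *ᵥ p = m - (c⁻¹ * d) • (1 : Fin n → ℝ) + c⁻¹ • (1 : Fin n → ℝ) := by
    rw [hpe, mulVec_add, mulVec_sub, hKmul, mulVec_smul, mulVec_smul, hu, hKmul]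
  have hp1 : p ⬝ᵥ (1 : Fin n → ℝ) = 1 := by
    have : p ⬝ᵥ (1 : Fin n → ℝ) = (1 : Fin n → ℝ) ⬝ᵥ p := dotProduct_comm _ _
    rw [this, hpe]
    simp only [dotProduct_add, dotProduct_sub, dotProduct_smul, h1d, ← hc, ← hd,
      smul_eq_mul]
    linear_combination (1 - d) * (inv_mul_cancel₀ hcne)
  have hpKp : p ⬝ᵥ (K *ᵥ p) = p ⬝ᵥ m - c⁻¹ * d + c⁻¹ := by
    rw [hKp]
    simp only [dotProduct_add, dotProduct_sub, dotProduct_smul, hp1, smul_eq_mul, mul_one]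
  rw [hpKp, hKp]
  ext i
  simp only [Pi.add_apply, Pi.sub_apply, Pi.smul_apply, Pi.one_apply, smul_eq_mul]
  ring
end
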